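/- Let C be a pure 2-dimensional 1-decomposable simplicial complex, and let full(C) be the pure 2-dimensional complex generated by all 3-cliques of the graph skel(C). Then there is an ordering F_1,...,F_t of the facets of full(C) not in C such that C + ⟨F_1,...,F_i⟩ is 1-decomposable for every 1 ≤ i ≤ t. In particular, full(C) is 1-decomposable. -/

import Mathlib

open Finset

variable {V : Type*} [DecidableEq V]

/-- A simplicial complex: a finite collection of finite faces closed under subsets. -/
def IsComplex (C : Finset (Finset V)) : Prop :=
  ∀ F ∈ C, ∀ G, G ⊆ F → G ∈ C

/-- `F` is a facet (maximal face) of `C`. -/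
def IsFacet (C : Finset (Finset V)) (F : Finset V) : Prop :=
  F ∈ C ∧ ∀ G ∈ C, F ⊆ G → F = G

/-- `C` is pure of dimension `d`: all facets have cardinality `d+1`. -/
def IsPure (C : Finset (Finset V)) (d : ℕ) : Prop :=
  ∀ F, IsFacet C F → F.card = d + 1

/-- The deletion of a face `F`: all faces not containing `F`. -/
def del (C : Finset (Finset V)) (F : Finset V) : Finset (Finset V) :=
  C.filter (fun G => ¬ F ⊆ G)

/-- The link of a face `F`. -/
def lk (C : Finset (Finset V)) (F : Finset V) : Finset (Finset V) :=
  C.filter (fun G => G ∩ F = ∅ ∧ G ∪ F ∈ C)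

/-- The simplicial complex generated by a collection of faces. -/
def gen (S : Finset (Finset V)) : Finset (Finset V) :=
  S.biUnion Finset.powerset

/-- `C` is a (full) simplex. -/
def IsSimplexCx (C : Finset (Finset V)) : Prop :=
  ∃ F : Finset V, C = F.powerset

/-- `F` is a shedding face of the pure `d`-dimensional complex `C`. -/
def Shedding (C : Finset (Finset V)) (d : ℕ) (F : Finset V) : Prop :=
  F ∈ C ∧ IsPure (del C F) d

/-- `k`-decomposability (Provan–Billera): a simplex, or there is a shedding face `F`
with `dim F ≤ k` whose deletion and link are again `k`-decomposable. -/
inductive Decomp : ℕ → Finset (Finset V) → Prop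
  | simplex (k : ℕ) (C : Finset (Finset V)) : IsSimplexCx C → Decomp k C
  | shed (k : ℕ) (C : Finset (Finset V)) (F : Finset V) (d : ℕ) :
      F ∈ C → F.Nonempty → F.card ≤ k + 1 → IsPure C d → IsPure (del C F) d →
      Decomp k (del C F) → Decomp k (lk C F) → Decomp k C

/-- The 1-dimensional skeleton of a complex, as a simple graph. -/
def skel (C : Finset (Finset V)) : SimpleGraph V where
  Adj x y := x ≠ y ∧ ({x, y} : Finset V) ∈ C
  symm := ⟨by
    rintro x y ⟨hxy, hm⟩
    exact ⟨hxy.symm, by rwa [Finset.pair_comm]⟩⟩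
  loopless := ⟨fun x h => h.1 rfl⟩

/-- A shelling of a pure `d`-dimensional complex: an ordering of the facets such that
each facet meets the union of the previous ones in a pure `(d-1)`-dimensional complex. -/
def IsShelling (C : Finset (Finset V)) (d : ℕ) (L : List (Finset V)) : Prop :=
  L.Nodup ∧ (∀ F, IsFacet C F ↔ F ∈ L) ∧
  ∀ i : ℕ, 1 ≤ i → ∀ h : i < L.length,
    IsPure (gen (L.take i).toFinset ∩ (L.get ⟨i, h⟩).powerset) (d - 1)

open scoped Classical in
/-- `full^d(G)`: the pure `d`-dimensional complex generated by all `(d+1)`-cliques of `G`. -/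
noncomputable def fullC [Fintype V] (d : ℕ) (G : SimpleGraph V) : Finset (Finset V) :=
  gen ((Finset.univ.powerset).filter fun s => G.IsClique (↑s : Set V) ∧ s.card = d + 1)

open scoped Classical in
/-- All `(d+1)`-cliques of `G` containing the set `e`. -/
noncomputable def cliquesWith [Fintype V] (d : ℕ) (G : SimpleGraph V) (e : Finset V) :
    Finset (Finset V) :=
  (Finset.univ.powerset).filter fun s => G.IsClique (↑s : Set V) ∧ s.card = d + 1 ∧ e ⊆ s

/-- `G^H`: join every vertex of `H` to every other vertex. -/
def coneGraph (G : SimpleGraph V) (H : Finset V) : SimpleGraph V where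
  Adj x y := x ≠ y ∧ (G.Adj x y ∨ x ∈ H ∨ y ∈ H)
  symm := ⟨by
    rintro x y ⟨hxy, h⟩
    refine ⟨hxy.symm, ?_⟩
    rcases h with h | h | h
    · exact Or.inl (G.adj_symm h)
    · exact Or.inr (Or.inr h)
    · exact Or.inr (Or.inl h)⟩
  loopless := ⟨fun x h => h.1 rfl⟩

/-- The graph `G` together with the extra edge `ab`. -/
def addEdge (G : SimpleGraph V) (a b : V) : SimpleGraph V :=
  G ⊔ SimpleGraph.fromEdgeSet {s(a, b)}

/-- `C` is fully coned with respect to `H`: every vertex of `H` is adjacent to every other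
vertex of `skel C`, and every `(d+1)`-clique of `skel C` is a facet of `C`. -/
def FullyConed (C : Finset (Finset V)) (d : ℕ) (H : Finset V) : Prop :=
  (∀ h ∈ H, ∀ v : V, ({v} : Finset V) ∈ C → v ≠ h → (skel C).Adj h v) ∧
  (∀ s : Finset V, (skel C).IsClique (↑s : Set V) → s.card = d + 1 → IsFacet C s)


section AuxProof

variable {C D : Finset (Finset V)} {d : ℕ}

lemma mem_gen' {S : Finset (Finset V)} {A : Finset V} : A ∈ gen S ↔ ∃ s ∈ S, A ⊆ s := by
  simp [gen]

lemma isComplex_del' (hC : IsComplex C) (G : Finset V) : IsComplex (del C G) := by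
  intro F hF T hT
  rw [del, Finset.mem_filter] at hF ⊢
  exact ⟨hC F hF.1 T hT, fun h => hF.2 (h.trans hT)⟩

lemma isComplex_lk' (hC : IsComplex C) (G : Finset V) : IsComplex (lk C G) := by
  intro F hF T hT
  rw [lk, Finset.mem_filter] at hF ⊢
  refine ⟨hC F hF.1 T hT,
    Finset.subset_empty.mp (hF.2.1 ▸ Finset.inter_subset_inter hT Finset.Subset.rfl),
    hC _ hF.2.2 _ (Finset.union_subset_union hT Finset.Subset.rfl)⟩

lemma exists_facet_above {S : Finset V} (hS : S ∈ C) : ∃ T, IsFacet C T ∧ S ⊆ T := by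
  obtain ⟨T, hT, hmax⟩ := Finset.exists_max_image (C.filter (S ⊆ ·)) Finset.card
    ⟨S, Finset.mem_filter.mpr ⟨hS, Finset.Subset.rfl⟩⟩
  rw [Finset.mem_filter] at hT
  exact ⟨T, ⟨hT.1, fun G hG hTG => Finset.eq_of_subset_of_card_le hTG
    (hmax G (Finset.mem_filter.mpr ⟨hG, hT.2.trans hTG⟩))⟩, hT.2⟩

lemma face_le_facet (hP : IsPure C d) {S : Finset V} (hS : S ∈ C) :
    ∃ T ∈ C, S ⊆ T ∧ T.card = d + 1 := by
  obtain ⟨T, hf, hsub⟩ := exists_facet_above hS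
  exact ⟨T, hf.1, hsub, hP T hf⟩

lemma pure_of_gen (h : ∀ S ∈ C, ∃ T ∈ C, S ⊆ T ∧ T.card = d + 1) : IsPure C d := by
  intro F hF
  obtain ⟨T, hT, hFT, hc⟩ := h F hF.1
  rw [hF.2 T hT hFT]; exact hc

lemma card_le_of_pure (hP : IsPure C d) {S : Finset V} (hS : S ∈ C) : S.card ≤ d + 1 := by
  obtain ⟨T, _, hsub, hc⟩ := face_le_facet hP hS
  exact hc ▸ Finset.card_le_card hsub

lemma decomp_zero_dim : ∀ D : Finset (Finset V), ∅ ∈ D → (∀ S ∈ D, S.card ≤ 1) →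
    Decomp 1 D := by
  intro D
  induction D using Finset.strongInduction with
  | _ D ih =>
    intro h0 h1
    have pure0 : ∀ E : Finset (Finset V), (∀ S ∈ E, S.card ≤ 1) → (∃ u : V, {u} ∈ E) →
        IsPure E 0 := by
      rintro E hE ⟨u, hu⟩ F hF
      have hle := hE F hF.1
      rcases Nat.eq_or_lt_of_le (Nat.zero_le F.card) with h | h
      · exfalso
        have hFe : F = ∅ := Finset.card_eq_zero.mp h.symm
        subst hFe
        exact (Finset.singleton_ne_empty u) (hF.2 {u} hu (Finset.empty_subset _)).symm
      · omega
    by_cases hs : ∃ v w : V, {v} ∈ D ∧ {w} ∈ D ∧ v ≠ w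
    · obtain ⟨v, w, hv, hw, hvw⟩ := hs
      have hdel : del D {v} = D.erase {v} := by
        ext S
        simp only [del, Finset.mem_filter, Finset.mem_erase]
        constructor
        · rintro ⟨hS, hns⟩; exact ⟨fun h => hns (h ▸ Finset.Subset.rfl), hS⟩
        · rintro ⟨hne, hS⟩
          refine ⟨hS, fun hsub => hne ?_⟩
          exact (Finset.eq_of_subset_of_card_le hsub
            ((h1 S hS).trans (Finset.card_singleton v).ge)).symm
      have hlk : lk D {v} = {∅} := by
        ext S
        simp only [lk, Finset.mem_filter, Finset.mem_singleton]
        constructor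
        · rintro ⟨hS, hint, hun⟩
          by_contra hSne
          obtain ⟨u, hu⟩ := Finset.nonempty_iff_ne_empty.mpr hSne
          have hvS : v ∉ S := fun hvS => Finset.notMem_empty v
            (hint ▸ Finset.mem_inter.mpr ⟨hvS, Finset.mem_singleton_self v⟩)
          have huv : u ≠ v := fun h => hvS (h ▸ hu)
          have : 1 < (S ∪ {v}).card := Finset.one_lt_card.mpr
            ⟨u, Finset.mem_union_left _ hu, v, Finset.mem_union_right _ (Finset.mem_singleton_self v), huv⟩
          exact absurd (h1 _ hun) (by omega)
        · rintro rfl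
          exact ⟨h0, by simp, by simpa using hv⟩
      refine Decomp.shed 1 D {v} 0 hv ⟨v, Finset.mem_singleton_self v⟩ (by simp)
        (pure0 D h1 ⟨v, hv⟩) ?_ ?_ ?_
      · rw [hdel]
        refine pure0 _ (fun S hS => h1 S (Finset.mem_of_mem_erase hS)) ⟨w, ?_⟩
        exact Finset.mem_erase.mpr ⟨by simp [hvw.symm], hw⟩
      · rw [hdel]
        exact ih _ (Finset.erase_ssubset hv)
          (Finset.mem_erase.mpr ⟨(Finset.singleton_ne_empty v).symm, h0⟩)
          (fun S hS => h1 S (Finset.mem_of_mem_erase hS))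
      · rw [hlk]
        exact Decomp.simplex 1 _ ⟨∅, by simp⟩
    · by_cases hv : ∃ v : V, {v} ∈ D
      · obtain ⟨v, hv⟩ := hv
        refine Decomp.simplex 1 D ⟨{v}, ?_⟩
        ext S
        rw [Finset.mem_powerset]
        constructor
        · intro hS
          rcases S.eq_empty_or_nonempty with rfl | ⟨u, hu⟩
          · exact Finset.empty_subset _
          · have hSu : S = {u} := Finset.eq_singleton_iff_unique_mem.mpr
              ⟨hu, fun x hx => by
                have := h1 S hS
                have := Finset.card_le_one.mp this x hx u hu
                exact this⟩
          -- u = v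
            have huv : u = v := by
              by_contra h
              exact hs ⟨u, v, hSu ▸ hS, hv, h⟩
            rw [hSu, huv]
        · intro hS
          rcases Finset.subset_singleton_iff.mp hS with rfl | rfl
          · exact h0
          · exact hv
      · refine Decomp.simplex 1 D ⟨∅, ?_⟩
        rw [Finset.powerset_empty]
        ext S
        simp only [Finset.mem_singleton]
        constructor
        · intro hS
          rcases S.eq_empty_or_nonempty with rfl | ⟨u, hu⟩
          · rfl
          · exfalso
            refine hv ⟨u, ?_⟩
            have hSu : S = {u} := Finset.eq_singleton_iff_unique_mem.mpr
              ⟨hu, fun x hx => Finset.card_le_one.mp (h1 S hS) x hx u hu⟩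
            exact hSu ▸ hS
        · rintro rfl; exact h0

lemma pure_lk_vertex (hC : IsComplex C) (hP : IsPure C 2) (v : V) : IsPure (lk C {v}) 1 := by
  apply pure_of_gen
  intro S hS
  rw [lk, Finset.mem_filter] at hS
  obtain ⟨hSC, hint, hun⟩ := hS
  obtain ⟨T, hT, hsub, hcard⟩ := face_le_facet hP hun
  have hvT : v ∈ T := hsub (Finset.mem_union_right _ (Finset.mem_singleton_self v))
  refine ⟨T.erase v, ?_, ?_, ?_⟩
  · rw [lk, Finset.mem_filter]
    refine ⟨hC T hT _ (Finset.erase_subset _ _), ?_, ?_⟩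
    · ext x
      simp only [Finset.mem_inter, Finset.mem_erase, Finset.mem_singleton,
        Finset.notMem_empty, iff_false]
      rintro ⟨⟨hxv, _⟩, rfl⟩; exact hxv rfl
    · have : T.erase v ∪ {v} = T := by
        rw [Finset.union_comm, ← Finset.insert_eq, Finset.insert_erase hvT]
      rw [this]; exact hT
  · intro x hx
    have hxT := hsub (Finset.mem_union_left _ hx)
    refine Finset.mem_erase.mpr ⟨?_, hxT⟩
    rintro rfl
    exact absurd (Finset.mem_inter.mpr ⟨hx, Finset.mem_singleton_self x⟩) (by simp [hint])
  · rw [Finset.card_erase_of_mem hvT, hcard]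

lemma decomp_nonempty : ∀ {k : ℕ} {D : Finset (Finset V)}, Decomp k D → D.Nonempty := by
  intro k D h
  induction h with
  | simplex D hS =>
    obtain ⟨S, rfl⟩ := hS
    exact ⟨∅, Finset.mem_powerset.mpr (Finset.empty_subset S)⟩
  | shed D G d hG hGne hGc hpu hpud hdl hlkd ihdel ihlk => exact ⟨G, hG⟩

lemma add_edge_aux : ∀ {k : ℕ} {D : Finset (Finset V)}, Decomp k D → k = 1 →
    ∀ b c : V, IsComplex D → IsPure D 1 → {b} ∈ D → {c} ∈ D → b ≠ c →
    ({b, c} : Finset V) ∉ D → Decomp 1 (insert {b, c} D) := by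
  intro k D hdec
  induction hdec with
  | simplex D hS =>
    intro _ b c _ _ hb hc _ he
    obtain ⟨S, rfl⟩ := hS
    refine absurd (Finset.mem_powerset.mpr ?_) he
    exact Finset.insert_subset (Finset.mem_powerset.mp hb (Finset.mem_singleton_self b))
      (Finset.mem_powerset.mp hc)
  | shed D G d hG hGne hGc hpu hpud hdl hlkd ihdel ihlk =>
    intro hk b c hcx hp hb hc hbc he
    subst hk
    -- d = 1
    obtain ⟨T, hTf, _⟩ := exists_facet_above hG
    have hd : d = 1 := by have h1 := hpu T hTf; have h2 := hp T hTf; omega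
    subst hd
    set e : Finset V := {b, c} with he_def
    have hce : e.card = 2 := Finset.card_pair hbc
    have hsube : ∀ S, S ⊆ e → S ≠ e → S ∈ D := by
      intro S hSe hne
      have hlt : S.card ≤ 1 := by
        have := Finset.card_lt_card (Finset.ssubset_iff_subset_ne.mpr ⟨hSe, hne⟩)
        omega
      rcases S.eq_empty_or_nonempty with rfl | ⟨x, hx⟩
      · exact hcx _ hb _ (Finset.empty_subset _)
      · have hSx : S = {x} := Finset.eq_singleton_iff_unique_mem.mpr
          ⟨hx, fun y hy => Finset.card_le_one.mp hlt y hy x hx⟩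
        subst hSx
        rcases Finset.mem_insert.mp (hSe hx) with rfl | hx'
        · exact hb
        · rw [Finset.mem_singleton.mp hx']; exact hc
    have pureE : IsPure (insert e D) 1 := by
      apply pure_of_gen
      intro S hS
      rcases Finset.mem_insert.mp hS with rfl | hS
      · exact ⟨_, Finset.mem_insert_self _ _, Finset.Subset.rfl, hce⟩
      · obtain ⟨T', hT', hsub, hc'⟩ := face_le_facet hp hS
        exact ⟨T', Finset.mem_insert_of_mem hT', hsub, hc'⟩
    by_cases hGe : G ⊆ e
    · -- G is a vertex of e
      have hGne' : G ≠ e := fun h => he (h ▸ hG)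
      obtain ⟨x, hx⟩ := hGne
      have hGx : G = {x} := by
        have hlt : G.card ≤ 1 := by
          have := Finset.card_lt_card (Finset.ssubset_iff_subset_ne.mpr ⟨hGe, hGne'⟩)
          omega
        exact Finset.eq_singleton_iff_unique_mem.mpr
          ⟨hx, fun y hy => Finset.card_le_one.mp hlt y hy x hx⟩
      obtain ⟨y, hy, hxy, hexy⟩ : ∃ y, y ∈ e ∧ x ≠ y ∧ e = {x, y} := by
        obtain ⟨u, v, huv, heuv⟩ := Finset.card_eq_two.mp hce
        have hxe : x ∈ e := hGe (hGx ▸ Finset.mem_singleton_self x)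
        rw [heuv] at hxe ⊢
        rcases Finset.mem_insert.mp hxe with rfl | hxv
        · exact ⟨v, Finset.mem_insert_of_mem (Finset.mem_singleton_self v), huv, rfl⟩
        · rw [Finset.mem_singleton.mp hxv]
          exact ⟨u, Finset.mem_insert_self _ _, huv.symm,
            by rw [Finset.pair_comm]⟩
      have hyD : ({y} : Finset V) ∈ D := hsube {y} (Finset.singleton_subset_iff.mpr hy)
        (fun h => by rw [← h] at hce; simp at hce)
      have hdelE : del (insert e D) G = del D G := by
        rw [del, del, Finset.filter_insert, if_neg (by simpa using hGe)]
      have hlkE : lk (insert e D) G = insert {y} (lk D G) := by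
        ext S
        simp only [lk, Finset.mem_filter, Finset.mem_insert]
        constructor
        · rintro ⟨hS, hint, hun⟩
          rcases hS with rfl | hS
          · exfalso
            have hxS : x ∈ e := hGe (hGx ▸ Finset.mem_singleton_self x)
            exact Finset.notMem_empty x (hint ▸ Finset.mem_inter.mpr
              ⟨hxS, hGx ▸ Finset.mem_singleton_self x⟩)
          · rcases hun with hun | hun
            · -- S ∪ G = e, so S = {y}
              left
              have hxnS : x ∉ S := fun hxS => Finset.notMem_empty x
                (hint ▸ Finset.mem_inter.mpr ⟨hxS, hGx ▸ Finset.mem_singleton_self x⟩)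
              apply Finset.Subset.antisymm
              · intro z hz
                have hze : z ∈ e := hun ▸ Finset.mem_union_left _ hz
                rw [hexy] at hze
                rcases Finset.mem_insert.mp hze with rfl | hz'
                · exact absurd hz hxnS
                · exact hz'
              · intro z hz
                rw [Finset.mem_singleton.mp hz]
                have hySG : y ∈ S ∪ G := by
                  rw [hun, hexy]
                  exact Finset.mem_insert_of_mem (Finset.mem_singleton_self y)
                rcases Finset.mem_union.mp hySG with h | h
                · exact h
                · exact absurd (Finset.mem_singleton.mp (hGx ▸ h)).symm hxy
            · exact Or.inr ⟨hS, hint, hun⟩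
        · rintro (rfl | ⟨hS, hint, hun⟩)
          · refine ⟨Or.inr hyD, ?_, ?_⟩
            · rw [hGx]
              ext z
              simp only [Finset.mem_inter, Finset.mem_singleton, Finset.notMem_empty,
                iff_false]
              rintro ⟨rfl, rfl⟩; exact hxy rfl
            · left
              rw [hGx, hexy]
              rw [Finset.union_comm, ← Finset.insert_eq]
          · exact ⟨Or.inr hS, hint, Or.inr hun⟩
      refine Decomp.shed 1 (insert e D) G 1 (Finset.mem_insert_of_mem hG) ⟨x, hx⟩
        hGc pureE ?_ ?_ ?_
      · rw [hdelE]; exact hpud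
      · rw [hdelE]; exact hdl
      · rw [hlkE]
        apply decomp_zero_dim
        · refine Finset.mem_insert_of_mem ?_
          rw [lk, Finset.mem_filter]
          exact ⟨hcx _ hG _ (Finset.empty_subset _), by simp, by simpa using hG⟩
        · intro S hS
          rcases Finset.mem_insert.mp hS with rfl | hS
          · simp
          · rw [lk, Finset.mem_filter] at hS
            have h2 := card_le_of_pure hp hS.2.2
            have hdisj : Disjoint S G := Finset.disjoint_iff_inter_eq_empty.mpr hS.2.1
            have := Finset.card_union_of_disjoint hdisj
            have hG1 : G.card = 1 := by rw [hGx]; simp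
            omega
    · -- G ⊄ e
      have hdelE : del (insert e D) G = insert e (del D G) := by
        rw [del, del, Finset.filter_insert, if_pos (by simpa using hGe)]
      have hcard2 : ∀ S ∈ D, S.card ≤ 2 := fun S hS => card_le_of_pure hp hS
      have hlkE : lk (insert e D) G = lk D G := by
        ext S
        simp only [lk, Finset.mem_filter, Finset.mem_insert]
        constructor
        · rintro ⟨hS, hint, hun⟩
          rcases hS with rfl | hS
          · exfalso
            have hdisj : Disjoint e G := Finset.disjoint_iff_inter_eq_empty.mpr hint
            rcases hun with hun | hun
            · exact hGe (hun ▸ (Finset.subset_union_right : G ⊆ e ∪ G))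
            · have h4 := hcard2 _ hun
              have h5 := Finset.card_union_of_disjoint hdisj
              have hg1 : 1 ≤ G.card := Finset.card_pos.mpr hGne
              rw [hce] at h5
              omega
          · rcases hun with hun | hun
            · exact absurd (hun ▸ Finset.subset_union_right : G ⊆ e) hGe
            · exact ⟨hS, hint, hun⟩
        · rintro ⟨hS, hint, hun⟩
          exact ⟨Or.inr hS, hint, Or.inr hun⟩
      refine Decomp.shed 1 (insert e D) G 1 (Finset.mem_insert_of_mem hG) hGne
        hGc pureE ?_ ?_ ?_
      · rw [hdelE]
        apply pure_of_gen
        intro S hS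
        rcases Finset.mem_insert.mp hS with rfl | hS
        · exact ⟨_, Finset.mem_insert_self _ _, Finset.Subset.rfl, hce⟩
        · obtain ⟨T', hT', hsub, hc'⟩ := face_le_facet hpud hS
          exact ⟨T', Finset.mem_insert_of_mem hT', hsub, hc'⟩
      · rw [hdelE]
        refine ihdel rfl b c (isComplex_del' hcx G) hpud ?_ ?_ hbc ?_
        · rw [del, Finset.mem_filter]
          refine ⟨hb, fun h => hGe ?_⟩
          rcases Finset.subset_singleton_iff.mp h with rfl | rfl
          · exact absurd rfl (Finset.nonempty_iff_ne_empty.mp hGne)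
          · exact Finset.singleton_subset_iff.mpr (Finset.mem_insert_self b {c})
        · rw [del, Finset.mem_filter]
          refine ⟨hc, fun h => hGe ?_⟩
          rcases Finset.subset_singleton_iff.mp h with rfl | rfl
          · exact absurd rfl (Finset.nonempty_iff_ne_empty.mp hGne)
          · exact Finset.singleton_subset_iff.mpr
              (Finset.mem_insert_of_mem (Finset.mem_singleton_self c))
        · rw [del, Finset.mem_filter]
          rintro ⟨h, -⟩; exact he h
      · rw [hlkE]; exact hlkd

lemma add_tri_aux : ∀ {k : ℕ} {D : Finset (Finset V)}, Decomp k D → k = 1 →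
    ∀ F : Finset V, IsComplex D → IsPure D 2 → F.card = 3 →
    (∀ s, s ⊆ F → s.card = 2 → s ∈ D) → F ∉ D → Decomp 1 (insert F D) := by
  intro k D hdec
  induction hdec with
  | simplex D hS =>
    intro _ F _ _ hF3 hedge hF
    obtain ⟨S, rfl⟩ := hS
    refine absurd (Finset.mem_powerset.mpr fun x hx => ?_) hF
    obtain ⟨u, hxu, huF, hu2⟩ := Finset.exists_subsuperset_card_eq
      (Finset.singleton_subset_iff.mpr hx) (show ({x} : Finset V).card ≤ 2 by simp)
      (show 2 ≤ F.card by omega)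
    exact Finset.mem_powerset.mp (hedge u huF hu2) (hxu (Finset.mem_singleton_self x))
  | shed D G d hG hGne hGc hpu hpud hdl hlkd ihdel ihlk =>
    intro hk F hcx hp hF3 hedge hF
    subst hk
    obtain ⟨T, hTf, _⟩ := exists_facet_above hG
    have hd : d = 2 := by have h1 := hpu T hTf; have h2 := hp T hTf; omega
    subst hd
    have hpsub : ∀ s, s ⊆ F → s ≠ F → s ∈ D := by
      intro s hsF hne
      have hlt : s.card ≤ 2 := by
        have := Finset.card_lt_card (Finset.ssubset_iff_subset_ne.mpr ⟨hsF, hne⟩)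
        omega
      obtain ⟨u, hsu, huF, hu2⟩ := Finset.exists_subsuperset_card_eq hsF hlt (by omega)
      exact hcx u (hedge u huF hu2) s hsu
    have hempty : ∅ ∈ D := hcx G hG ∅ (Finset.empty_subset _)
    have pureE : IsPure (insert F D) 2 := by
      apply pure_of_gen
      intro S hS
      rcases Finset.mem_insert.mp hS with rfl | hS
      · exact ⟨_, Finset.mem_insert_self _ _, Finset.Subset.rfl, hF3⟩
      · obtain ⟨T', hT', hsub, hc'⟩ := face_le_facet hp hS
        exact ⟨T', Finset.mem_insert_of_mem hT', hsub, hc'⟩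
    by_cases hGF : G ⊆ F
    · have hGne' : G ≠ F := fun h => by rw [h] at hGc; omega
      have hdelE : del (insert F D) G = del D G := by
        rw [del, del, Finset.filter_insert, if_neg (by simpa using hGF)]
      have hFdiff : F \ G ∈ D := by
        refine hpsub _ (Finset.sdiff_subset) fun h => ?_
        obtain ⟨x, hx⟩ := hGne
        have : x ∈ F \ G := h.symm ▸ hGF hx
        exact (Finset.mem_sdiff.mp this).2 hx
      have hlkE : lk (insert F D) G = insert (F \ G) (lk D G) := by
        ext S
        simp only [lk, Finset.mem_filter, Finset.mem_insert]
        constructor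
        · rintro ⟨hS, hint, hun⟩
          rcases hS with rfl | hS
          · exfalso
            obtain ⟨x, hx⟩ := hGne
            exact Finset.notMem_empty x (hint ▸ Finset.mem_inter.mpr ⟨hGF hx, hx⟩)
          · rcases hun with hun | hun
            · left
              apply Finset.Subset.antisymm
              · intro z hz
                refine Finset.mem_sdiff.mpr ⟨hun ▸ Finset.mem_union_left _ hz, fun hzG => ?_⟩
                exact Finset.notMem_empty z (hint ▸ Finset.mem_inter.mpr ⟨hz, hzG⟩)
              · intro z hz
                obtain ⟨hzF, hzG⟩ := Finset.mem_sdiff.mp hz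
                rcases Finset.mem_union.mp (hun ▸ hzF : z ∈ S ∪ G) with h | h
                · exact h
                · exact absurd h hzG
            · exact Or.inr ⟨hS, hint, hun⟩
        · rintro (rfl | ⟨hS, hint, hun⟩)
          · exact ⟨Or.inr hFdiff, Finset.sdiff_inter_self _ _,
              Or.inl (Finset.sdiff_union_of_subset hGF)⟩
          · exact ⟨Or.inr hS, hint, Or.inr hun⟩
      refine Decomp.shed 1 (insert F D) G 2 (Finset.mem_insert_of_mem hG) hGne
        hGc pureE ?_ ?_ ?_
      · rw [hdelE]; exact hpud
      · rw [hdelE]; exact hdl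
      · rw [hlkE]
        have hg12 : G.card = 1 ∨ G.card = 2 := by
          have := Finset.card_pos.mpr hGne; omega
        rcases hg12 with hg1 | hg2
        · -- G = {v}: use add_edge_aux on lk D {v}
          obtain ⟨v, rfl⟩ := Finset.card_eq_one.mp hg1
          have hdiff2 : (F \ {v}).card = 2 := by
            rw [Finset.card_sdiff_of_subset (by simpa using hGF), hF3]
            simp
          obtain ⟨b, c, hbc, hbcE⟩ := Finset.card_eq_two.mp hdiff2
          have hvF : v ∈ F := by simpa using hGF
          have hbF : b ∈ F := Finset.sdiff_subset (hbcE ▸ Finset.mem_insert_self b {c})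
          have hcF : c ∈ F := Finset.sdiff_subset
            (hbcE ▸ Finset.mem_insert_of_mem (Finset.mem_singleton_self c))
          have hbv : b ≠ v := fun h =>
            (Finset.mem_sdiff.mp (hbcE ▸ Finset.mem_insert_self b {c})).2 (by simp [h])
          have hcv : c ≠ v := fun h =>
            (Finset.mem_sdiff.mp
              (hbcE ▸ Finset.mem_insert_of_mem (Finset.mem_singleton_self c))).2 (by simp [h])
          have hbl : ({b} : Finset V) ∈ lk D {v} := by
            rw [lk, Finset.mem_filter]
            refine ⟨hpsub _ (Finset.singleton_subset_iff.mpr hbF)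
              (fun h => by rw [← h] at hF3; simp at hF3), ?_, ?_⟩
            · ext z; simp only [Finset.mem_inter, Finset.mem_singleton,
                Finset.notMem_empty, iff_false]
              rintro ⟨rfl, rfl⟩; exact hbv rfl
            · refine hedge _ ?_ ?_
              · rw [Finset.union_comm]
                exact Finset.insert_subset hvF (Finset.singleton_subset_iff.mpr hbF)
              · rw [Finset.union_comm, ← Finset.insert_eq]
                exact Finset.card_pair (Ne.symm hbv)
          have hcl : ({c} : Finset V) ∈ lk D {v} := by
            rw [lk, Finset.mem_filter]
            refine ⟨hpsub _ (Finset.singleton_subset_iff.mpr hcF)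
              (fun h => by rw [← h] at hF3; simp at hF3), ?_, ?_⟩
            · ext z; simp only [Finset.mem_inter, Finset.mem_singleton,
                Finset.notMem_empty, iff_false]
              rintro ⟨rfl, rfl⟩; exact hcv rfl
            · refine hedge _ ?_ ?_
              · rw [Finset.union_comm]
                exact Finset.insert_subset hvF (Finset.singleton_subset_iff.mpr hcF)
              · rw [Finset.union_comm, ← Finset.insert_eq]
                exact Finset.card_pair (Ne.symm hcv)
          have hFsplit : ({b, c} : Finset V) ∪ {v} = F := by
            rw [← hbcE, Finset.sdiff_union_of_subset hGF]
          have hnotlk : ({b, c} : Finset V) ∉ lk D {v} := by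
            rw [lk, Finset.mem_filter]
            rintro ⟨-, -, hm⟩
            rw [hFsplit] at hm
            exact hF hm
          rw [hbcE]
          exact add_edge_aux hlkd rfl b c (isComplex_lk' hcx {v})
            (pure_lk_vertex hcx hp v) hbl hcl hbc hnotlk
        · -- G is an edge: link is 0-dimensional
          apply decomp_zero_dim
          · refine Finset.mem_insert_of_mem ?_
            rw [lk, Finset.mem_filter]
            exact ⟨hempty, by simp, by simpa using hG⟩
          · intro S hS
            rcases Finset.mem_insert.mp hS with rfl | hS
            · rw [Finset.card_sdiff_of_subset (by simpa using hGF), hF3, hg2]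
            · rw [lk, Finset.mem_filter] at hS
              have h3 := card_le_of_pure hp hS.2.2
              have hdisj : Disjoint S G := Finset.disjoint_iff_inter_eq_empty.mpr hS.2.1
              have := Finset.card_union_of_disjoint hdisj
              omega
    · -- G ⊄ F
      have hdelE : del (insert F D) G = insert F (del D G) := by
        rw [del, del, Finset.filter_insert, if_pos (by simpa using hGF)]
      have hcard3 : ∀ S ∈ D, S.card ≤ 3 := fun S hS => card_le_of_pure hp hS
      have hlkE : lk (insert F D) G = lk D G := by
        ext S
        simp only [lk, Finset.mem_filter, Finset.mem_insert]
        constructor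
        · rintro ⟨hS, hint, hun⟩
          rcases hS with rfl | hS
          · exfalso
            have hdisj : Disjoint S G := Finset.disjoint_iff_inter_eq_empty.mpr hint
            rcases hun with hun | hun
            · exact hGF (hun ▸ (Finset.subset_union_right : G ⊆ S ∪ G))
            · have h4 := hcard3 _ hun
              have h5 := Finset.card_union_of_disjoint hdisj
              have hg1 : 1 ≤ G.card := Finset.card_pos.mpr hGne
              rw [hF3] at h5
              omega
          · rcases hun with hun | hun
            · exact absurd (hun ▸ (Finset.subset_union_right : G ⊆ S ∪ G)) hGF
            · exact ⟨hS, hint, hun⟩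
        · rintro ⟨hS, hint, hun⟩
          exact ⟨Or.inr hS, hint, Or.inr hun⟩
      refine Decomp.shed 1 (insert F D) G 2 (Finset.mem_insert_of_mem hG) hGne
        hGc pureE ?_ ?_ ?_
      · rw [hdelE]
        apply pure_of_gen
        intro S hS
        rcases Finset.mem_insert.mp hS with rfl | hS
        · exact ⟨_, Finset.mem_insert_self _ _, Finset.Subset.rfl, hF3⟩
        · obtain ⟨T', hT', hsub, hc'⟩ := face_le_facet hpud hS
          exact ⟨T', Finset.mem_insert_of_mem hT', hsub, hc'⟩
      · rw [hdelE]
        refine ihdel rfl F (isComplex_del' hcx G) hpud hF3 ?_ ?_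
        · intro s hsF hs2
          rw [del, Finset.mem_filter]
          exact ⟨hedge s hsF hs2, fun h => hGF (h.trans hsF)⟩
        · rw [del, Finset.mem_filter]
          rintro ⟨h, -⟩; exact hF h
      · rw [hlkE]; exact hlkd

end AuxProof
set_option maxRecDepth 8000 in
/-- A pure 2-dimensional 1-decomposable complex can be extended facet by facet to
`full(C)`, staying 1-decomposable; in particular `full(C)` is 1-decomposable. -/
theorem two_dim_to_full [Fintype V] (C : Finset (Finset V))
    (hC : IsComplex C) (hP : IsPure C 2) (hD : Decomp 1 C) :
    (∃ L : List (Finset V), L.Nodup ∧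
      (∀ F : Finset V, F ∈ L ↔ (IsFacet (fullC 2 (skel C)) F ∧ F ∉ C)) ∧
      ∀ i : ℕ, i ≤ L.length → Decomp 1 (C ∪ gen (L.take i).toFinset)) ∧
    Decomp 1 (fullC 2 (skel C)) := by
  classical
  have hne : C.Nonempty := decomp_nonempty hD
  have hempty : ∅ ∈ C := by
    obtain ⟨S, hS⟩ := hne
    exact hC S hS ∅ (Finset.empty_subset S)
  set K : Finset (Finset V) := Finset.univ.powerset.filter
    (fun s => s.card = 3 ∧ ∀ t ⊆ s, t.card = 2 → t ∈ C) with hKdef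
  have hK : ∀ s : Finset V, s ∈ K ↔ s.card = 3 ∧ ∀ t ⊆ s, t.card = 2 → t ∈ C := by
    intro s; simp [hKdef]
  have hfullmem : ∀ A : Finset V, A ∈ fullC 2 (skel C) ↔ ∃ s ∈ K, A ⊆ s := by
    intro A
    rw [fullC, mem_gen']
    constructor
    · rintro ⟨s, hs, hAs⟩
      rw [Finset.mem_filter] at hs
      refine ⟨s, (hK s).mpr ⟨hs.2.2, ?_⟩, hAs⟩
      intro t hts ht2
      obtain ⟨x, y, hxy, rfl⟩ := Finset.card_eq_two.mp ht2
      have hadj := hs.2.1 (Finset.mem_coe.mpr (hts (Finset.mem_insert_self x {y})))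
        (Finset.mem_coe.mpr (hts (Finset.mem_insert_of_mem (Finset.mem_singleton_self y)))) hxy
      have hadj' : x ≠ y ∧ ({x, y} : Finset V) ∈ C := hadj
      exact hadj'.2
    · rintro ⟨s, hs, hAs⟩
      rw [hK] at hs
      refine ⟨s, Finset.mem_filter.mpr
        ⟨Finset.mem_powerset.mpr (Finset.subset_univ s), ?_, hs.1⟩, hAs⟩
      intro x hx y hy hxy
      exact (show x ≠ y ∧ ({x, y} : Finset V) ∈ C from ⟨hxy, hs.2 {x, y} (Finset.insert_subset (Finset.mem_coe.mp hx)
        (Finset.singleton_subset_iff.mpr (Finset.mem_coe.mp hy))) (Finset.card_pair hxy)⟩)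
  have hCsub : ∀ S ∈ C, S ∈ fullC 2 (skel C) := by
    intro S hS
    obtain ⟨T', hT', hsub, hc3⟩ := face_le_facet hP hS
    exact (hfullmem S).mpr ⟨T', (hK T').mpr ⟨by omega, fun t hts _ => hC T' hT' t hts⟩, hsub⟩
  have hproper : ∀ s, s ∈ K → ∀ t ⊆ s, t ≠ s → t ∈ C := by
    intro s hs t hts hne'
    rw [hK] at hs
    have hlt : t.card ≤ 2 := by
      have := Finset.card_lt_card (Finset.ssubset_iff_subset_ne.mpr ⟨hts, hne'⟩); omega
    obtain ⟨u, htu, hus, hu2⟩ := Finset.exists_subsuperset_card_eq hts hlt (by omega)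
    exact hC u (hs.2 u hus hu2) t htu
  have hfacet : ∀ s, IsFacet (fullC 2 (skel C)) s ↔ s ∈ K := by
    intro s
    constructor
    · rintro ⟨hmem, hmax⟩
      obtain ⟨t, htK, hst⟩ := (hfullmem s).mp hmem
      have h1 : s = t := hmax t ((hfullmem t).mpr ⟨t, htK, Finset.Subset.rfl⟩) hst
      exact h1 ▸ htK
    · intro hs
      refine ⟨(hfullmem s).mpr ⟨s, hs, Finset.Subset.rfl⟩, ?_⟩
      intro A hA hsA
      obtain ⟨t, htK, hAt⟩ := (hfullmem A).mp hA
      have ht3 := ((hK t).mp htK).1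
      have hs3 := ((hK s).mp hs).1
      have h1 : s = t := Finset.eq_of_subset_of_card_le (hsA.trans hAt) (by omega)
      exact Finset.Subset.antisymm hsA (h1 ▸ hAt)
  set Tm : Finset (Finset V) := K.filter (fun s => s ∉ C) with hTdef
  set L : List (Finset V) := Tm.toList with hLdef
  have hLnodup : L.Nodup := Finset.nodup_toList Tm
  have hLmem : ∀ F : Finset V, F ∈ L ↔ F ∈ K ∧ F ∉ C := by
    intro F
    rw [hLdef, Finset.mem_toList, hTdef, Finset.mem_filter]
  have hgen : ∀ i : ℕ, C ∪ gen ((L.take i).toFinset) = C ∪ (L.take i).toFinset := by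
    intro i
    ext A
    simp only [Finset.mem_union, mem_gen', List.mem_toFinset]
    constructor
    · rintro (hA | ⟨s, hsL, hAs⟩)
      · exact Or.inl hA
      · have hsK : s ∈ K := ((hLmem s).mp (List.mem_of_mem_take hsL)).1
        by_cases hAe : A = s
        · exact Or.inr (hAe ▸ hsL)
        · exact Or.inl (hproper s hsK A hAs hAe)
    · rintro (hA | hA)
      · exact Or.inl hA
      · exact Or.inr ⟨A, hA, Finset.Subset.rfl⟩
  have key : ∀ i : ℕ, i ≤ L.length →
      IsComplex (C ∪ (L.take i).toFinset) ∧ IsPure (C ∪ (L.take i).toFinset) 2 ∧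
      Decomp 1 (C ∪ (L.take i).toFinset) := by
    intro i
    induction i with
    | zero =>
      intro _
      rw [List.take_zero]
      simp only [List.toFinset_nil, Finset.union_empty]
      exact ⟨hC, hP, hD⟩
    | succ n ih =>
      intro hlen
      have hlt : n < L.length := by omega
      obtain ⟨hcxn, hpn, hdn⟩ := ih (by omega)
      set Fn := L.get ⟨n, hlt⟩ with hFndef
      have htake : (L.take (n + 1)).toFinset = insert Fn (L.take n).toFinset := by
        ext x
        simp only [List.mem_toFinset, Finset.mem_insert, List.take_succ,
          List.getElem?_eq_getElem hlt, Option.toList_some, List.mem_append,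
          List.mem_singleton, hFndef, List.get_eq_getElem]
        tauto
      have hFnL : Fn ∈ L := List.get_mem L ⟨n, hlt⟩
      have hFnK : Fn ∈ K := ((hLmem Fn).mp hFnL).1
      have hFnC : Fn ∉ C := ((hLmem Fn).mp hFnL).2
      have hFn3 : Fn.card = 3 := ((hK Fn).mp hFnK).1
      have hFnnotTake : Fn ∉ L.take n := by
        intro hmem
        obtain ⟨j, hj, hje⟩ := List.mem_iff_getElem.mp hmem
        have hj' : j < n := by
          have h := hj
          rw [List.length_take] at h
          omega
        have hj2 : j < L.length := by omega
        have heq : L[j] = L[n] := by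
          rw [List.getElem_take] at hje
          rw [hje, hFndef]
          simp
        have := (hLnodup.getElem_inj_iff).mp heq
        omega
      rw [htake, Finset.union_insert]
      have hFnCn : Fn ∉ C ∪ (L.take n).toFinset := by
        rw [Finset.mem_union]
        rintro (h | h)
        · exact hFnC h
        · exact hFnnotTake (List.mem_toFinset.mp h)
      have hedges : ∀ s, s ⊆ Fn → s.card = 2 → s ∈ C ∪ (L.take n).toFinset := fun s hs h2 =>
        Finset.mem_union_left _ (((hK Fn).mp hFnK).2 s hs h2)
      refine ⟨?_, ?_, ?_⟩
      · intro S hS t ht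
        rcases Finset.mem_insert.mp hS with rfl | hS
        · by_cases hte : t = Fn
          · exact hte ▸ Finset.mem_insert_self _ _
          · exact Finset.mem_insert_of_mem (Finset.mem_union_left _
              (hproper _ hFnK t ht hte))
        · exact Finset.mem_insert_of_mem (hcxn S hS t ht)
      · apply pure_of_gen
        intro S hS
        rcases Finset.mem_insert.mp hS with rfl | hS
        · exact ⟨_, Finset.mem_insert_self _ _, Finset.Subset.rfl, hFn3⟩
        · obtain ⟨T', hT', hsub, hc'⟩ := face_le_facet hpn hS
          exact ⟨T', Finset.mem_insert_of_mem hT', hsub, hc'⟩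
      · exact add_tri_aux hdn rfl Fn hcxn hpn hFn3 hedges hFnCn
  have hfulleq : fullC 2 (skel C) = C ∪ Tm := by
    ext A
    rw [hfullmem, Finset.mem_union]
    constructor
    · rintro ⟨s, hsK, hAs⟩
      by_cases hAe : A = s
      · subst hAe
        by_cases hAC : A ∈ C
        · exact Or.inl hAC
        · exact Or.inr (by rw [hTdef, Finset.mem_filter]; exact ⟨hsK, hAC⟩)
      · exact Or.inl (hproper s hsK A hAs hAe)
    · rintro (hA | hA)
      · exact (hfullmem A).mp (hCsub A hA)
      · rw [hTdef, Finset.mem_filter] at hA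
        exact ⟨A, hA.1, Finset.Subset.rfl⟩
  refine ⟨⟨L, hLnodup, ?_, ?_⟩, ?_⟩
  · intro F
    rw [hLmem F, hfacet F]
  · intro i hi
    rw [hgen i]
    exact (key i hi).2.2
  · have hfin := (key L.length le_rfl).2.2
    rw [List.take_length] at hfin
    have hLT : L.toFinset = Tm := by rw [hLdef]; exact Finset.toList_toFinset Tm
    rw [hfulleq, ← hLT]
    exact hfin
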